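/- Harnack chain lower bound in Lipschitz cylinders: For every δ ∈ (0, 1/2) there exists a constant c ∈ (0,1), depending only on n, λ, Λ, L and δ, such that the following holds. Let A be uniformly elliptic on C_1 and let w ∈ C²(C_1) satisfy tr(A D²w) = 0 in C_1. If w ≥ −1 on C_1 and w ≥ M on A_1 := C_1 \ C(1, δ) for some M > 0, then w(x₀) ≥ (M + 1)c − 1 for every x₀ ∈ A_{1/2} := C_{1/2} \ C(1/2, δ/2). -/

import Mathlib

open MeasureTheory Metric Filter

noncomputable section

/-- `ℝ^n` with the Euclidean norm. -/
abbrev Eucl (n : ℕ) : Type := EuclideanSpace ℝ (Fin n)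

/-- Uniform ellipticity of the coefficient matrix `A` on `Ω`:
`λ|ξ|² ≤ ξ·(A(x)ξ)` and `|A(x)ξ| ≤ Λ|ξ|`. -/
def UnifElliptic {n : ℕ} (lam Lam : ℝ) (Ω : Set (Eucl n))
    (A : Eucl n → Matrix (Fin n) (Fin n) ℝ) : Prop :=
  ∀ x ∈ Ω, ∀ ξ : Eucl n,
    lam * ‖ξ‖ ^ 2 ≤ ∑ i, ξ i * ∑ j, A x i j * ξ j ∧
    Real.sqrt (∑ i, (∑ j, A x i j * ξ j) ^ 2) ≤ Lam * ‖ξ‖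

/-- `u` is a `C²` solution of `tr(A D²u) = 0` on the open set `Ω`. -/
def NondivSolution {n : ℕ} (A : Eucl n → Matrix (Fin n) (Fin n) ℝ) (Ω : Set (Eucl n))
    (u : Eucl n → ℝ) : Prop :=
  ContDiffOn ℝ 2 u Ω ∧ ∀ x ∈ Ω,
    ∑ i, ∑ j, A x i j *
      fderiv ℝ (fun y => fderiv ℝ u y (EuclideanSpace.single i 1)) x
        (EuclideanSpace.single j 1) = 0

/-- The first `d` coordinates of a point in `ℝ^{d+1}`. -/
def ehead {d : ℕ} (x : Eucl (d + 1)) : Eucl d := WithLp.toLp 2 (fun i : Fin d => x i.castSucc)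

/-- The last coordinate of a point in `ℝ^{d+1}`. -/
def elast {d : ℕ} (x : Eucl (d + 1)) : ℝ := x (Fin.last d)

/-- `h_Γ(x) = x_n - g(x')`. -/
def hG {d : ℕ} (g : Eucl d → ℝ) (x : Eucl (d + 1)) : ℝ := elast x - g (ehead x)

/-- The cylindrical region `C(r,ρ) = {|x'| < r, 0 < h_Γ(x) < ρ}` above the graph of `g`. -/
def cylC {d : ℕ} (g : Eucl d → ℝ) (r ρ : ℝ) : Set (Eucl (d + 1)) :=
  {x | ‖ehead x‖ < r ∧ 0 < hG g x ∧ hG g x < ρ}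

/-- `u` vanishes continuously on the part of the graph `Γ` with `|x₀'| < r`,
as a function on `Ω`. -/
def VanishesOnGraph {d : ℕ} (g : Eucl d → ℝ) (r : ℝ) (Ω : Set (Eucl (d + 1)))
    (u : Eucl (d + 1) → ℝ) : Prop :=
  ∀ x₀ : Eucl (d + 1), ‖ehead x₀‖ < r → elast x₀ = g (ehead x₀) →
    Tendsto u (nhdsWithin x₀ Ω) (nhds 0)

/-- The point `e_n / 2`. -/
def enHalf (d : ℕ) : Eucl (d + 1) := (1 / 2 : ℝ) • EuclideanSpace.single (Fin.last d) 1

open Set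

lemma second_deriv_test {f f' : ℝ → ℝ} {c : ℝ}
    (hf : ∀ᶠ t in nhds (0:ℝ), HasDerivAt f (f' t) t)
    (hf' : HasDerivAt f' c 0) (hmin : IsLocalMin f 0) : 0 ≤ c := by
  by_contra hc
  push_neg at hc
  have h0 : f' 0 = 0 := by
    have h1 : deriv f 0 = f' 0 := (hf.self_of_nhds).deriv
    rw [← h1]; exact hmin.deriv_eq_zero
  -- slope of f' tends to c < 0
  have hslope : Tendsto (slope f' 0) (nhdsWithin (0:ℝ) {(0:ℝ)}ᶜ) (nhds c) :=
    hasDerivAt_iff_tendsto_slope.1 hf'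
  have hev : ∀ᶠ t in nhdsWithin (0:ℝ) {(0:ℝ)}ᶜ, slope f' 0 t < 0 :=
    hslope.eventually_lt_const hc
  rw [eventually_nhdsWithin_iff] at hev
  rcases Metric.eventually_nhds_iff.1 hev with ⟨ε, hε, hball⟩
  rcases Metric.eventually_nhds_iff.1 hf with ⟨ε', hε', hfd⟩
  set ε₀ := min ε ε' with hε₀
  have hε₀pos : 0 < ε₀ := lt_min hε hε'
  -- f' < 0 on (0, ε₀)
  have hneg : ∀ t ∈ Ioo (0:ℝ) ε₀, f' t < 0 := by
    intro t ht
    have h1 : dist t 0 < ε := by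
      rw [Real.dist_eq, sub_zero, abs_of_pos ht.1]
      exact ht.2.trans_le (min_le_left _ _)
    have h2 : t ∈ ({(0:ℝ)}ᶜ : Set ℝ) := by simp [ne_of_gt ht.1]
    have := hball h1 h2
    rw [slope_def_field, h0, sub_zero, sub_zero, div_neg_iff] at this
    rcases this with ⟨_, h⟩ | ⟨h, _⟩
    · linarith [ht.1]
    · exact h
  -- f strictly decreasing on [0, ε₀)
  have hcont : ContinuousOn f (Icc 0 (ε₀/2)) := by
    intro t ht
    have : dist t 0 < ε' := by
      rw [Real.dist_eq, sub_zero, abs_of_nonneg ht.1]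
      have := ht.2; have : t ≤ ε₀/2 := ht.2
      nlinarith [min_le_right ε ε', lt_min hε hε']
    exact ((hfd this).differentiableAt.continuousAt).continuousWithinAt
  have hanti : StrictAntiOn f (Icc 0 (ε₀/2)) := by
    apply strictAntiOn_of_deriv_neg (convex_Icc _ _) hcont
    intro t ht
    rw [interior_Icc] at ht
    have htt : t ∈ Ioo (0:ℝ) ε₀ := ⟨ht.1, by nlinarith [ht.2]⟩
    have hd : dist t 0 < ε' := by
      rw [Real.dist_eq, sub_zero, abs_of_pos ht.1]
      calc t < ε₀/2 := ht.2
        _ ≤ ε' := by nlinarith [min_le_right ε ε', lt_min hε hε']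
    rw [(hfd hd).deriv]
    exact hneg t htt
  -- contradiction with local min
  rcases Metric.eventually_nhds_iff.1 hmin with ⟨ρ, hρ, hmin'⟩
  set t := min (ε₀/2) (ρ/2) with htdef
  have ht0 : 0 < t := lt_min (by linarith) (by linarith)
  have h1 : f t < f 0 := by
    apply hanti (left_mem_Icc.2 (by linarith)) ⟨le_of_lt ht0, min_le_left _ _⟩ ht0
  have h2 : f 0 ≤ f t := by
    apply hmin'
    rw [Real.dist_eq, sub_zero, abs_of_pos ht0]
    calc t ≤ ρ/2 := min_le_right _ _
      _ < ρ := by linarith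
  linarith


lemma eucl_apply_sum (m : ℕ) (f : Fin m → Eucl m) (j : Fin m) :
    (∑ i, f i) j = ∑ i, f i j := by
  induction (Finset.univ : Finset (Fin m)) using Finset.induction_on with
  | empty => rfl
  | insert a s h ih => rw [Finset.sum_insert h, Finset.sum_insert h, ← ih]; rfl

lemma eucl_norm_eq_sq (m : ℕ) (x : Eucl m) : ‖x‖ = Real.sqrt (∑ i, x i ^ 2) := by
  rw [EuclideanSpace.norm_eq]; congr 1
  apply Finset.sum_congr rfl; intros; rw [Real.norm_eq_abs, sq_abs]

lemma eucl_norm_sq (m : ℕ) (x : Eucl m) : ‖x‖ ^ 2 = ∑ i, x i ^ 2 := by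
  rw [eucl_norm_eq_sq, Real.sq_sqrt (by positivity)]

lemma eucl_sum_single (m : ℕ) (x : Eucl m) :
    ∑ i, x i • EuclideanSpace.single i (1:ℝ) = x := by
  refine PiLp.ext fun j => ?_
  rw [eucl_apply_sum]
  have : ∀ i, (x i • EuclideanSpace.single i (1:ℝ)) j
      = x i • ((EuclideanSpace.single i (1:ℝ)) j) := fun i => rfl
  simp only [this, EuclideanSpace.single_apply]
  simp

section SndDeriv
variable {m : ℕ} {Ω : Set (Eucl m)} {u : Eucl m → ℝ} {x : Eucl m}

/-- basis vector -/
def ev {m : ℕ} (i : Fin m) : Eucl m := EuclideanSpace.single i (1:ℝ)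

lemma hasfderiv_on_open (hΩ : IsOpen Ω) (hu : ContDiffOn ℝ 2 u Ω) {y : Eucl m} (hy : y ∈ Ω) :
    HasFDerivAt u (fderiv ℝ u y) y :=
  (((hu.differentiableOn (by norm_num)) y hy).differentiableAt (hΩ.mem_nhds hy)).hasFDerivAt

lemma fderiv_fderiv_hasfderiv (hΩ : IsOpen Ω) (hu : ContDiffOn ℝ 2 u Ω) (hx : x ∈ Ω) :
    HasFDerivAt (fderiv ℝ u) (fderiv ℝ (fderiv ℝ u) x) x := by
  have h1 : ContDiffOn ℝ 1 (fderiv ℝ u) Ω := hu.fderiv_of_isOpen hΩ (by norm_num)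
  exact (((h1.differentiableOn (by norm_num)) x hx).differentiableAt (hΩ.mem_nhds hx)).hasFDerivAt

/-- The entry `H i j` used in `NondivSolution` equals the second full derivative paired. -/
lemma snd_partial_eq (hΩ : IsOpen Ω) (hu : ContDiffOn ℝ 2 u Ω) (hx : x ∈ Ω) (v w : Eucl m) :
    fderiv ℝ (fun y => fderiv ℝ u y v) x w = (fderiv ℝ (fderiv ℝ u) x w) v := by
  have h2 := fderiv_fderiv_hasfderiv hΩ hu hx
  have h3 : HasFDerivAt (fun y => fderiv ℝ u y v)
      ((ContinuousLinearMap.apply ℝ ℝ v).comp (fderiv ℝ (fderiv ℝ u) x)) x :=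
    (ContinuousLinearMap.apply ℝ ℝ v).hasFDerivAt.comp x h2
  rw [h3.fderiv]; rfl

lemma snd_deriv_symm (hΩ : IsOpen Ω) (hu : ContDiffOn ℝ 2 u Ω) (hx : x ∈ Ω) (v w : Eucl m) :
    (fderiv ℝ (fderiv ℝ u) x) v w = (fderiv ℝ (fderiv ℝ u) x) w v := by
  apply second_derivative_symmetric_of_eventually
  · filter_upwards [hΩ.mem_nhds hx] with y hy using hasfderiv_on_open hΩ hu hy
  · exact fderiv_fderiv_hasfderiv hΩ hu hx

/-- at an interior local min, second derivative along any direction is nonneg. -/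
lemma snd_deriv_nonneg (hΩ : IsOpen Ω) (hu : ContDiffOn ℝ 2 u Ω) (hx : x ∈ Ω)
    (hmin : IsLocalMin u x) (ξ : Eucl m) :
    0 ≤ (fderiv ℝ (fderiv ℝ u) x) ξ ξ := by
  set l : ℝ → Eucl m := fun t => x + t • ξ with hl
  have hl0 : l 0 = x := by simp [hl]
  have hlder : ∀ t : ℝ, HasDerivAt l ξ t := by
    intro t
    have := ((hasDerivAt_id t).smul_const ξ).const_add x
    rw [one_smul] at this
    exact this
  have hlcont : Continuous l := by
    have : ∀ t, ContinuousAt l t := fun t => (hlder t).differentiableAt.continuousAt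
    exact continuous_iff_continuousAt.2 this
  have hopen : IsOpen (l ⁻¹' Ω) := hΩ.preimage hlcont
  have h0mem : (0:ℝ) ∈ l ⁻¹' Ω := by simp [hl0, hx]
  apply second_deriv_test (f := u ∘ l) (f' := fun t => fderiv ℝ u (l t) ξ)
  · filter_upwards [hopen.mem_nhds h0mem] with t ht
    exact (hasfderiv_on_open hΩ hu ht).comp_hasDerivAt t (hlder t)
  · have h3 : HasFDerivAt (fun y => fderiv ℝ u y ξ)
        ((ContinuousLinearMap.apply ℝ ℝ ξ).comp (fderiv ℝ (fderiv ℝ u) x)) x :=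
      (ContinuousLinearMap.apply ℝ ℝ ξ).hasFDerivAt.comp x (fderiv_fderiv_hasfderiv hΩ hu hx)
    have h3' : HasFDerivAt (fun y => fderiv ℝ u y ξ)
        ((ContinuousLinearMap.apply ℝ ℝ ξ).comp (fderiv ℝ (fderiv ℝ u) x)) (l 0) := by
      rw [hl0]; exact h3
    exact h3'.comp_hasDerivAt 0 (hlder 0)
  · have h5 : Tendsto l (nhds (0:ℝ)) (nhds x) := by
      rw [← hl0]; exact hlcont.continuousAt
    have h6 := h5.eventually hmin
    refine h6.mono fun t ht => ?_
    simpa [Function.comp, hl0] using ht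

lemma clm_expand (T : Eucl m →L[ℝ] ℝ) (ξ : Eucl m) : T ξ = ∑ i, ξ i * T (ev i) := by
  conv_lhs => rw [← eucl_sum_single m ξ]
  rw [map_sum]
  exact Finset.sum_congr rfl fun i _ => by rw [ContinuousLinearMap.map_smul, smul_eq_mul]; rfl

lemma quad_form_eq (G2 : Eucl m →L[ℝ] Eucl m →L[ℝ] ℝ) (ξ : Eucl m) :
    G2 ξ ξ = ∑ i, ∑ j, ξ i * ξ j * G2 (ev j) (ev i) := by
  have h1 : G2 ξ ξ = ∑ i, ξ i * G2 ξ (ev i) := clm_expand (G2 ξ) ξ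
  rw [h1]
  apply Finset.sum_congr rfl
  intro i _
  have h2 : G2 ξ (ev i) = ∑ j, ξ j * G2 (ev j) (ev i) := by
    have := clm_expand ((ContinuousLinearMap.apply ℝ ℝ (ev i)).comp G2) ξ
    simpa using this
  rw [h2, Finset.mul_sum]
  exact Finset.sum_congr rfl fun j _ => by ring

/-- positive semidefiniteness of the Hessian matrix entries at an interior local min. -/
lemma hess_psd (hΩ : IsOpen Ω) (hu : ContDiffOn ℝ 2 u Ω) (hx : x ∈ Ω)
    (hmin : IsLocalMin u x) (ξ : Eucl m) :
    0 ≤ ∑ i, ∑ j, ξ i * ξ j *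
      fderiv ℝ (fun y => fderiv ℝ u y (ev i)) x (ev j) := by
  have he : ∀ i j : Fin m, fderiv ℝ (fun y => fderiv ℝ u y (ev i)) x (ev j)
      = (fderiv ℝ (fderiv ℝ u) x) (ev j) (ev i) := fun i j => by
    rw [snd_partial_eq hΩ hu hx]
  simp only [he]
  rw [← quad_form_eq]
  exact snd_deriv_nonneg hΩ hu hx hmin ξ

end SndDeriv


/-- algebra: pairing of a matrix `A` satisfying an ellipticity-type positivity
with a symmetric psd matrix `H` is nonnegative. -/
lemma trace_pairing_nonneg (m : ℕ) (A H : Matrix (Fin m) (Fin m) ℝ)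
    (hsym : H.IsHermitian)
    (hpsd : ∀ ξ : Eucl m, 0 ≤ ∑ i, ∑ j, ξ i * ξ j * H i j)
    (hell : ∀ ξ : Eucl m, 0 ≤ ∑ i, ξ i * ∑ j, A i j * ξ j) :
    0 ≤ ∑ i, ∑ j, A i j * H i j := by
  have hps : H.PosSemidef := by
    refine Matrix.PosSemidef.of_dotProduct_mulVec_nonneg hsym fun v => ?_
    have := hpsd ((WithLp.equiv 2 (Fin m → ℝ)).symm v)
    simp only [dotProduct, Matrix.mulVec, star_trivial]
    calc (0:ℝ) ≤ ∑ i, ∑ j, v i * v j * H i j := this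
      _ = ∑ i, v i * ∑ j, H i j * v j := by
            apply Finset.sum_congr rfl; intro i _
            rw [Finset.mul_sum]; apply Finset.sum_congr rfl; intro j _; ring
  obtain ⟨B, hB⟩ : ∃ B : Matrix (Fin m) (Fin m) ℝ, H = B.conjTranspose * B := by
    classical
    open MatrixOrder in exact CStarAlgebra.nonneg_iff_eq_star_mul_self.mp hps.nonneg
  have hentry : ∀ i j, H i j = ∑ k, B k i * B k j := by
    intro i j
    rw [hB]
    simp [Matrix.mul_apply, Matrix.conjTranspose_apply]
  calc (0:ℝ) ≤ ∑ k, ∑ i, B k i * ∑ j, A i j * B k j := by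
        apply Finset.sum_nonneg; intro k _
        exact hell ((WithLp.equiv 2 (Fin m → ℝ)).symm (fun i => B k i))
    _ = ∑ i, ∑ j, A i j * H i j := by
        simp only [hentry]
        rw [Finset.sum_comm]
        apply Finset.sum_congr rfl; intro i _
        simp only [Finset.mul_sum]
        rw [Finset.sum_comm]
        apply Finset.sum_congr rfl; intro j _
        apply Finset.sum_congr rfl; intro k _
        ring

section MP
variable {m : ℕ}

lemma isHermitian_of_symm {H : Matrix (Fin m) (Fin m) ℝ} (h : ∀ i j, H i j = H j i) :
    H.IsHermitian := Matrix.ext fun i j => by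
  simp [Matrix.conjTranspose_apply, h i j]

/-- Weak minimum principle with strict subsolution. -/
lemma min_principle (U Ω' : Set (Eucl m)) (u : Eucl m → ℝ)
    (A : Eucl m → Matrix (Fin m) (Fin m) ℝ)
    (hU : IsOpen U) (hu : ContDiffOn ℝ 2 u U)
    (hΩ : IsOpen Ω') (hb : Bornology.IsBounded Ω') (hcl : closure Ω' ⊆ U)
    (hell : ∀ x ∈ Ω', ∀ ξ : Eucl m, 0 ≤ ∑ i, ξ i * ∑ j, A x i j * ξ j)
    (hpde : ∀ x ∈ Ω', ∑ i, ∑ j, A x i j *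
        fderiv ℝ (fun y => fderiv ℝ u y (ev i)) x (ev j) < 0)
    (hbd : ∀ x ∈ frontier Ω', 0 ≤ u x) :
    ∀ x ∈ closure Ω', 0 ≤ u x := by
  by_contra hcon
  push_neg at hcon
  obtain ⟨x, hx, hxneg⟩ := hcon
  have hcompact : IsCompact (closure Ω') :=
    Metric.isCompact_of_isClosed_isBounded isClosed_closure hb.closure
  have hcont : ContinuousOn u (closure Ω') := (hu.continuousOn).mono hcl
  obtain ⟨z, hz, hzmin⟩ := hcompact.exists_isMinOn ⟨x, hx⟩ hcont
  have hzneg : u z < 0 := lt_of_le_of_lt (hzmin hx) hxneg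
  have hzΩ : z ∈ Ω' := by
    rcases (closure_eq_interior_union_frontier Ω' ▸ hz) with h | h
    · rwa [hΩ.interior_eq] at h
    · exact absurd (hbd z h) (not_le.2 hzneg)
  have hzU : z ∈ U := hcl hz
  have hlocal : IsLocalMin u z := hzmin.isLocalMin (mem_nhds_iff.2 ⟨Ω', subset_closure, hΩ, hzΩ⟩)
  have hpsd : ∀ ξ : Eucl m, 0 ≤ ∑ i, ∑ j, ξ i * ξ j *
      fderiv ℝ (fun y => fderiv ℝ u y (ev i)) z (ev j) :=
    fun ξ => hess_psd hU hu hzU hlocal ξ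
  have hsym : ∀ i j : Fin m, fderiv ℝ (fun y => fderiv ℝ u y (ev i)) z (ev j)
      = fderiv ℝ (fun y => fderiv ℝ u y (ev j)) z (ev i) := by
    intro i j
    rw [snd_partial_eq hU hu hzU, snd_partial_eq hU hu hzU]
    exact snd_deriv_symm hU hu hzU _ _
  have h0 : 0 ≤ ∑ i, ∑ j, A z i j *
      fderiv ℝ (fun y => fderiv ℝ u y (ev i)) z (ev j) := by
    apply trace_pairing_nonneg m (A z)
      (Matrix.of fun i j => fderiv ℝ (fun y => fderiv ℝ u y (ev i)) z (ev j))
    · exact isHermitian_of_symm fun i j => hsym i j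
    · exact hpsd
    · exact hell z hzΩ
  exact absurd (hpde z hzΩ) (not_lt.2 h0)

end MP

section Barrier
variable {m : ℕ} (z : Eucl m) (q : ℝ)

def sfn (z : Eucl m) (x : Eucl m) : ℝ := ∑ i, (x i - z i)^2

def DS (z : Eucl m) (x : Eucl m) : Eucl m →L[ℝ] ℝ :=
  ∑ i, (2 * (x i - z i)) • (EuclideanSpace.proj i : Eucl m →L[ℝ] ℝ)

lemma DS_apply (x : Eucl m) (ξ : Eucl m) : DS z x ξ = ∑ i, 2 * (x i - z i) * ξ i := by
  simp [DS, ContinuousLinearMap.sum_apply, mul_comm]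

lemma DS_apply_ev (x : Eucl m) (j : Fin m) : DS z x (ev j) = 2 * (x j - z j) := by
  rw [DS_apply]
  rw [Finset.sum_eq_single j]
  · simp [ev, EuclideanSpace.single_apply]
  · intro i _ hij
    simp only [ev, EuclideanSpace.single_apply]
    rw [if_neg hij, mul_zero]
  · simp

lemma sfn_eq_norm (x : Eucl m) : sfn z x = ‖x - z‖^2 := by
  rw [eucl_norm_sq]
  apply Finset.sum_congr rfl
  intro i _
  rfl

lemma sfn_pos {x : Eucl m} (hx : x ≠ z) : 0 < sfn z x := by
  rw [sfn_eq_norm]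
  have h : x - z ≠ 0 := sub_ne_zero.2 hx
  exact pow_pos (norm_pos_iff.mpr h) 2

lemma hasFDerivAt_sfn (x : Eucl m) : HasFDerivAt (sfn z) (DS z x) x := by
  apply HasFDerivAt.fun_sum
  intro i _
  have h1 : HasFDerivAt (fun y : Eucl m => y i - z i)
      (EuclideanSpace.proj i : Eucl m →L[ℝ] ℝ) x :=
    (EuclideanSpace.proj i : Eucl m →L[ℝ] ℝ).hasFDerivAt.sub_const (z i)
  have h2 := h1.fun_mul h1
  have h3 : (fun y : Eucl m => (y i - z i)^2) = fun y : Eucl m => (y i - z i) * (y i - z i) := by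
    funext y; ring
  rw [h3]
  refine h2.congr_fderiv ?_
  refine ContinuousLinearMap.ext fun v => ?_
  simp only [ContinuousLinearMap.add_apply, ContinuousLinearMap.smul_apply, smul_eq_mul]
  ring

lemma contDiff_sfn : ContDiff ℝ 2 (sfn z) := by
  apply ContDiff.sum
  intro i _
  have h1 : ContDiff ℝ 2 (fun y : Eucl m => y i - z i) :=
    ((EuclideanSpace.proj i : Eucl m →L[ℝ] ℝ).contDiff).sub contDiff_const
  exact h1.pow 2

def phi (z : Eucl m) (q : ℝ) (x : Eucl m) : ℝ := (sfn z x) ^ (-q)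

lemma hasFDerivAt_phi {x : Eucl m} (hx : x ≠ z) :
    HasFDerivAt (phi z q) ((-q * (sfn z x) ^ (-q-1)) • DS z x) x := by
  have h1 : HasDerivAt (fun t : ℝ => t ^ (-q)) (-q * (sfn z x) ^ (-q-1)) (sfn z x) :=
    Real.hasDerivAt_rpow_const (Or.inl (sfn_pos z hx).ne')
  exact h1.comp_hasFDerivAt x (hasFDerivAt_sfn z x)

/-- formula for the partial derivatives of phi. -/
def pphi (z : Eucl m) (q : ℝ) (i : Fin m) (x : Eucl m) : ℝ :=
  -q * (sfn z x) ^ (-q-1) * (2 * (x i - z i))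

lemma fderiv_phi_ev {x : Eucl m} (hx : x ≠ z) (i : Fin m) :
    fderiv ℝ (phi z q) x (ev i) = pphi z q i x := by
  rw [(hasFDerivAt_phi z q hx).fderiv]
  rw [ContinuousLinearMap.smul_apply, DS_apply_ev]
  simp [pphi, smul_eq_mul, mul_assoc]

lemma hasFDerivAt_pphi {x : Eucl m} (hx : x ≠ z) (i : Fin m) :
    HasFDerivAt (pphi z q i)
      ((-q * (sfn z x) ^ (-q-1)) • ((2:ℝ) • (EuclideanSpace.proj i : Eucl m →L[ℝ] ℝ))
        + (2 * (x i - z i)) • ((-q * ((-q-1) * (sfn z x) ^ (-q-1-1))) • DS z x)) x := by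
  have ha : HasFDerivAt (fun y => -q * (sfn z y) ^ (-q-1))
      ((-q * ((-q-1) * (sfn z x) ^ (-q-1-1))) • DS z x) x := by
    have h1 : HasDerivAt (fun t : ℝ => t ^ (-q-1)) ((-q-1) * (sfn z x) ^ (-q-1-1)) (sfn z x) :=
      Real.hasDerivAt_rpow_const (Or.inl (sfn_pos z hx).ne')
    have h2 := h1.comp_hasFDerivAt x (hasFDerivAt_sfn z x)
    have h3 := h2.const_mul (-q)
    rw [smul_smul] at h3
    exact h3
  have hb : HasFDerivAt (fun y : Eucl m => 2 * (y i - z i))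
      ((2:ℝ) • (EuclideanSpace.proj i : Eucl m →L[ℝ] ℝ)) x := by
    have h1 : HasFDerivAt (fun y : Eucl m => y i - z i)
        (EuclideanSpace.proj i : Eucl m →L[ℝ] ℝ) x :=
      (EuclideanSpace.proj i : Eucl m →L[ℝ] ℝ).hasFDerivAt.sub_const (z i)
    simpa using h1.const_mul (2:ℝ)
  have := ha.mul hb
  have hfn : (pphi z q i) = fun y => (-q * (sfn z y) ^ (-q-1)) * (2 * (y i - z i)) := by
    funext y; simp [pphi]
  rw [hfn]
  exact this

lemma contDiffOn_phi : ContDiffOn ℝ 2 (phi z q) {y : Eucl m | y ≠ z} := by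
  intro y hy
  have h1 : ContDiffAt ℝ 2 (fun t : ℝ => t ^ (-q)) (sfn z y) :=
    Real.contDiffAt_rpow_const_of_ne (sfn_pos z hy).ne'
  exact (h1.comp y (contDiff_sfn z).contDiffAt).contDiffWithinAt

/-- second partials of phi. -/
lemma snd_partial_phi {x : Eucl m} (hx : x ≠ z) (i j : Fin m) :
    fderiv ℝ (fun y => fderiv ℝ (phi z q) y (ev i)) x (ev j) =
      -q * (sfn z x) ^ (-q-1) * (2 * (if i = j then (1:ℝ) else 0))
        + (2 * (x i - z i)) * (-q * ((-q-1) * (sfn z x) ^ (-q-1-1)) * (2 * (x j - z j))) := by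
  have hopen : IsOpen {y : Eucl m | y ≠ z} := isOpen_ne
  have hev : (fun y => fderiv ℝ (phi z q) y (ev i)) =ᶠ[nhds x] (pphi z q i) := by
    filter_upwards [hopen.mem_nhds hx] with y hy
    exact fderiv_phi_ev z q hy i
  rw [hev.fderiv_eq, (hasFDerivAt_pphi z q hx i).fderiv]
  simp only [ContinuousLinearMap.add_apply, ContinuousLinearMap.smul_apply, DS_apply_ev]
  have hproj : (EuclideanSpace.proj i : Eucl m →L[ℝ] ℝ) (ev j)
      = (if i = j then (1:ℝ) else 0) := by
    simp [ev, EuclideanSpace.single_apply]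
  rw [hproj]
  simp only [smul_eq_mul]

lemma norm_ev (m : ℕ) (i : Fin m) : ‖(ev i : Eucl m)‖ = 1 := by
  simp [ev, EuclideanSpace.norm_single]

lemma trace_phi_pos (z x : Eucl m) (hx : x ≠ z) (lam Lam : ℝ)
    (hlam : 0 < lam) (hq : 0 < q) (hγ : ↑m * Lam ≤ 2*(q+1)*lam - lam)
    (A : Matrix (Fin m) (Fin m) ℝ)
    (hell1 : ∀ ξ : Eucl m, lam * ‖ξ‖^2 ≤ ∑ i, ξ i * ∑ j, A i j * ξ j)
    (hell2 : ∀ ξ : Eucl m, Real.sqrt (∑ i, (∑ j, A i j * ξ j)^2) ≤ Lam * ‖ξ‖) :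
    2*q*lam * (sfn z x) ^ (-q-1) ≤
      ∑ i, ∑ j, A i j * fderiv ℝ (fun y => fderiv ℝ (phi z q) y (ev i)) x (ev j) := by
  have hs : 0 < sfn z x := sfn_pos z hx
  -- diagonal bound
  have hdiag : ∀ i, A i i ≤ Lam := by
    intro i
    have h2 := hell2 (ev i)
    rw [norm_ev, mul_one] at h2
    have hin : ∀ i', (∑ j, A i' j * (ev i) j) = A i' i := by
      intro i'
      rw [Finset.sum_eq_single i]
      · simp [ev, EuclideanSpace.single_apply]
      · intro j _ hj; simp [ev, EuclideanSpace.single_apply, if_neg hj, mul_zero]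
      · simp
    simp only [hin] at h2
    calc A i i ≤ |A i i| := le_abs_self _
      _ = Real.sqrt ((A i i)^2) := (Real.sqrt_sq_eq_abs _).symm
      _ ≤ Real.sqrt (∑ i', (A i' i)^2) := by
          apply Real.sqrt_le_sqrt
          exact Finset.single_le_sum (fun j _ => sq_nonneg (A j i)) (Finset.mem_univ i)
      _ ≤ Lam := h2
  have htr : ∑ i, A i i ≤ (m : ℝ) * Lam := by
    calc ∑ i, A i i ≤ ∑ _i : Fin m, Lam := Finset.sum_le_sum fun i _ => hdiag i
      _ = (m:ℝ) * Lam := by rw [Finset.sum_const]; simp [mul_comm]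
  -- quadratic form bound with v = x - z
  have hQ : lam * sfn z x ≤ ∑ i, (x i - z i) * ∑ j, A i j * (x j - z j) := by
    have h3 := hell1 (x - z)
    rw [← sfn_eq_norm] at h3
    exact h3
  have hQ0 : 0 ≤ ∑ i, (x i - z i) * ∑ j, A i j * (x j - z j) := by
    have : (0:ℝ) ≤ lam * sfn z x := by positivity
    linarith
  -- expand the second partials
  have hsplit : ∑ i, ∑ j, A i j * fderiv ℝ (fun y => fderiv ℝ (phi z q) y (ev i)) x (ev j)
      = (∑ i, A i i) * (2 * (-q * (sfn z x) ^ (-q-1)))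
        + (4 * (q * (q+1) * (sfn z x) ^ (-q-1-1)))
          * (∑ i, (x i - z i) * ∑ j, A i j * (x j - z j)) := by
    have he : ∀ i j, A i j * fderiv ℝ (fun y => fderiv ℝ (phi z q) y (ev i)) x (ev j) =
        A i j * (-q * (sfn z x) ^ (-q-1) * (2 * (if i = j then (1:ℝ) else 0)))
          + A i j * ((2 * (x i - z i)) * (-q * ((-q-1) * (sfn z x) ^ (-q-1-1)) * (2 * (x j - z j)))) := by
      intro i j; rw [snd_partial_phi z q hx i j]; ring
    simp only [he]
    rw [Finset.sum_mul, Finset.mul_sum]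
    rw [← Finset.sum_add_distrib]
    apply Finset.sum_congr rfl
    intro i _
    rw [Finset.sum_add_distrib]
    congr 1
    · rw [Finset.sum_eq_single i]
      · have : (if i = i then (1:ℝ) else 0) = 1 := if_pos rfl
        rw [this]; ring
      · intro j _ hj; rw [if_neg (Ne.symm hj)]; simp
      · simp
    · rw [Finset.mul_sum, Finset.mul_sum]
      apply Finset.sum_congr rfl
      intro j _
      ring
  rw [hsplit]
  set s := sfn z x with hsdef
  have hpows : s ^ (-q-1-1) * s = s ^ (-q-1) := by
    have h2 := (Real.rpow_add hs (-q-1-1) 1).symm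
    rw [Real.rpow_one] at h2
    rw [h2]
    norm_num
  have hsp1 : (0:ℝ) < s ^ (-q-1) := Real.rpow_pos_of_pos hs _
  have hsp2 : (0:ℝ) < s ^ (-q-1-1) := Real.rpow_pos_of_pos hs _
  have hterm1 : ((m:ℝ) * Lam) * (2 * (-q * s ^ (-q-1))) ≤
      (∑ i, A i i) * (2 * (-q * s ^ (-q-1))) := by
    apply mul_le_mul_of_nonpos_right htr
    nlinarith [mul_pos hq hsp1]
  have hterm2 : (4 * (q * (q+1) * s ^ (-q-1-1))) * (lam * s) ≤
      (4 * (q * (q+1) * s ^ (-q-1-1))) * (∑ i, (x i - z i) * ∑ j, A i j * (x j - z j)) := by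
    apply mul_le_mul_of_nonneg_left hQ
    nlinarith [mul_pos (mul_pos hq (show (0:ℝ) < q+1 by linarith)) hsp2]
  have hfinal : 2*q*lam * s ^ (-q-1) ≤
      ((m:ℝ) * Lam) * (2 * (-q * s ^ (-q-1))) + (4 * (q * (q+1) * s ^ (-q-1-1))) * (lam * s) := by
    have hexp : (4 * (q * (q+1) * s ^ (-q-1-1))) * (lam * s)
        = 4 * q * (q+1) * lam * s ^ (-q-1) := by
      rw [← hpows]; ring
    rw [hexp]
    have h4 : ((m:ℝ) * Lam) * (2 * (-q * s ^ (-q-1)))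
        = -(2*q*((m:ℝ)*Lam)) * s ^ (-q-1) := by ring
    rw [h4]
    have hco : 2*q*lam ≤ -(2*q*((m:ℝ)*Lam)) + 4*q*(q+1)*lam := by nlinarith
    calc 2*q*lam * s ^ (-q-1) ≤ (-(2*q*((m:ℝ)*Lam)) + 4*q*(q+1)*lam) * s ^ (-q-1) :=
          mul_le_mul_of_nonneg_right hco hsp1.le
      _ = -(2*q*((m:ℝ)*Lam)) * s ^ (-q-1) + 4*q*(q+1)*lam * s ^ (-q-1) := by ring
  calc 2*q*lam * s ^ (-q-1)
      ≤ ((m:ℝ) * Lam) * (2 * (-q * s ^ (-q-1))) + (4 * (q * (q+1) * s ^ (-q-1-1))) * (lam * s) :=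
        hfinal
    _ ≤ _ := add_le_add hterm1 hterm2
end Barrier


section Step
variable {m : ℕ}


/-- Hessian entries of `w - κ g + c`. -/
lemma hess_sub_const_mul (U : Set (Eucl m)) (hU : IsOpen U) (w g : Eucl m → ℝ) (κ c : ℝ)
    (hw : ContDiffOn ℝ 2 w U) (hg : ContDiffOn ℝ 2 g U) (x : Eucl m) (hx : x ∈ U) (i j : Fin m) :
    fderiv ℝ (fun y => fderiv ℝ (fun t => w t - κ * g t + c) y (ev i)) x (ev j)
      = fderiv ℝ (fun y => fderiv ℝ w y (ev i)) x (ev j)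
        - κ * fderiv ℝ (fun y => fderiv ℝ g y (ev i)) x (ev j) := by
  have hdw : ∀ y ∈ U, DifferentiableAt ℝ w y := fun y hy =>
    ((hw.differentiableOn (by norm_num)) y hy).differentiableAt (hU.mem_nhds hy)
  have hdg : ∀ y ∈ U, DifferentiableAt ℝ g y := fun y hy =>
    ((hg.differentiableOn (by norm_num)) y hy).differentiableAt (hU.mem_nhds hy)
  have step1 : ∀ y ∈ U, fderiv ℝ (fun t => w t - κ * g t + c) y (ev i)
      = fderiv ℝ w y (ev i) - κ * fderiv ℝ g y (ev i) := by
    intro y hy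
    rw [fderiv_add_const, fderiv_fun_sub (hdw y hy) ((hdg y hy).const_mul κ), fderiv_const_mul (hdg y hy)]
    simp
  have hev : (fun y => fderiv ℝ (fun t => w t - κ * g t + c) y (ev i))
      =ᶠ[nhds x] (fun y => fderiv ℝ w y (ev i) - κ * fderiv ℝ g y (ev i)) := by
    filter_upwards [hU.mem_nhds hx] with y hy using step1 y hy
  rw [hev.fderiv_eq]
  have hdiffw : DifferentiableAt ℝ (fun y => fderiv ℝ w y (ev i)) x := by
    have h3 : HasFDerivAt (fun y => fderiv ℝ w y (ev i))
        ((ContinuousLinearMap.apply ℝ ℝ (ev i)).comp (fderiv ℝ (fderiv ℝ w) x)) x :=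
      (ContinuousLinearMap.apply ℝ ℝ (ev i)).hasFDerivAt.comp x (fderiv_fderiv_hasfderiv hU hw hx)
    exact h3.differentiableAt
  have hdiffg : DifferentiableAt ℝ (fun y => fderiv ℝ g y (ev i)) x := by
    have h3 : HasFDerivAt (fun y => fderiv ℝ g y (ev i))
        ((ContinuousLinearMap.apply ℝ ℝ (ev i)).comp (fderiv ℝ (fderiv ℝ g) x)) x :=
      (ContinuousLinearMap.apply ℝ ℝ (ev i)).hasFDerivAt.comp x (fderiv_fderiv_hasfderiv hU hg hx)
    exact h3.differentiableAt
  rw [fderiv_fun_sub hdiffw (hdiffg.const_mul κ), fderiv_const_mul hdiffg]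
  simp

def c0 (q : ℝ) : ℝ := ((9:ℝ)^(-q) - (16:ℝ)^(-q)) / (1 - (16:ℝ)^(-q))

lemma rpow_neg_anti {a b q : ℝ} (ha : 0 < a) (hab : a < b) (hq : 0 < q) :
    b^(-q) < a^(-q) := by
  rw [Real.rpow_neg ha.le, Real.rpow_neg (by linarith)]
  exact inv_strictAnti₀ (Real.rpow_pos_of_pos ha q) (Real.rpow_lt_rpow ha.le hab hq)

lemma rpow_neg_anti_le {a b q : ℝ} (ha : 0 < a) (hab : a ≤ b) (hq : 0 < q) :
    b^(-q) ≤ a^(-q) := by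
  rcases eq_or_lt_of_le hab with rfl | h
  · exact le_refl _
  · exact (rpow_neg_anti ha h hq).le

lemma c0_pos (q : ℝ) (hq : 0 < q) : 0 < c0 q := by
  apply div_pos
  · have := rpow_neg_anti (show (0:ℝ) < 9 by norm_num) (show (9:ℝ) < 16 by norm_num) hq
    linarith
  · have := rpow_neg_anti (show (0:ℝ) < 1 by norm_num) (show (1:ℝ) < 16 by norm_num) hq
    rw [Real.one_rpow] at this
    linarith

lemma c0_lt_one (q : ℝ) (hq : 0 < q) : c0 q < 1 := by
  have h16 : (16:ℝ)^(-q) < 1 := by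
    have := rpow_neg_anti (show (0:ℝ) < 1 by norm_num) (show (1:ℝ) < 16 by norm_num) hq
    rwa [Real.one_rpow] at this
  have h9 : (9:ℝ)^(-q) < 1 := by
    have := rpow_neg_anti (show (0:ℝ) < 1 by norm_num) (show (1:ℝ) < 9 by norm_num) hq
    rwa [Real.one_rpow] at this
  show ((9:ℝ)^(-q) - (16:ℝ)^(-q)) / (1 - (16:ℝ)^(-q)) < 1
  rw [div_lt_one (by linarith)]
  linarith

/-- One barrier step. -/
lemma barrier_step (lam Lam q : ℝ) (hlam : 0 < lam) (hq : 0 < q)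
    (hγ : ↑m * Lam ≤ 2*(q+1)*lam - lam)
    (U : Set (Eucl m)) (hU : IsOpen U)
    (A : Eucl m → Matrix (Fin m) (Fin m) ℝ)
    (hell : ∀ x ∈ U, ∀ ξ : Eucl m,
      lam * ‖ξ‖^2 ≤ ∑ i, ξ i * ∑ j, A x i j * ξ j ∧
      Real.sqrt (∑ i, (∑ j, A x i j * ξ j)^2) ≤ Lam * ‖ξ‖)
    (w : Eucl m → ℝ) (hw : ContDiffOn ℝ 2 w U)
    (hpde : ∀ x ∈ U, ∑ i, ∑ j, A x i j *
        fderiv ℝ (fun y => fderiv ℝ w y (ev i)) x (ev j) = 0)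
    (hwm1 : ∀ x ∈ U, -1 ≤ w x)
    (z : Eucl m) (r : ℝ) (hr : 0 < r)
    (hball : closedBall z (4*r) ⊆ U)
    (mlev : ℝ) (hmlev : 0 < mlev + 1)
    (hlow : ∀ x ∈ closedBall z r, mlev ≤ w x) :
    ∀ x, dist x z ≤ 3*r → (mlev + 1) * c0 q - 1 ≤ w x := by
  intro x₁ hx₁
  -- trivial case: inside the inner ball
  by_cases hin : dist x₁ z ≤ r
  · have h1 := hlow x₁ (mem_closedBall.2 hin)
    have h2 : (mlev + 1) * c0 q ≤ mlev + 1 := by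
      nlinarith [c0_lt_one q hq, c0_pos q hq]
    linarith
  push_neg at hin
  -- setup
  set rval : ℝ := (r^2) ^ (-q) with hrval
  set Rval : ℝ := ((4*r)^2) ^ (-q) with hRval
  have hrR : Rval < rval := by
    apply rpow_neg_anti (by positivity) (by nlinarith) hq
  set κ : ℝ := (mlev + 1) / (rval - Rval) with hκ
  have hκpos : 0 < κ := div_pos hmlev (by linarith)
  set u : Eucl m → ℝ := fun t => w t - κ * phi z q t + (1 + κ * Rval) with hu
  set W : Set (Eucl m) := U ∩ {y | y ≠ z} with hW
  have hWopen : IsOpen W := hU.inter isOpen_ne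
  have huC2 : ContDiffOn ℝ 2 u W := by
    have h1 : ContDiffOn ℝ 2 (fun t => w t - κ * phi z q t) W :=
      (hw.mono inter_subset_left).sub
        (((contDiffOn_phi z q).mono inter_subset_right).const_smul κ)
    exact h1.add contDiffOn_const
  set Ω' : Set (Eucl m) := ball z (4*r) \ closedBall z r with hΩ'
  have hΩopen : IsOpen Ω' := isOpen_ball.sdiff Metric.isClosed_closedBall
  have hΩb : Bornology.IsBounded Ω' := (isBounded_ball).subset diff_subset
  have hsfn_dist : ∀ y : Eucl m, sfn z y = dist y z ^ 2 := by
    intro y; rw [sfn_eq_norm, dist_eq_norm]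
  have hclW : closure Ω' ⊆ W := by
    have hsub : Ω' ⊆ closedBall z (4*r) ∩ {y | r ≤ dist y z} := by
      intro y hy
      exact ⟨ball_subset_closedBall hy.1, le_of_not_gt fun h => hy.2 (mem_closedBall.2 h.le)⟩
    have hclosed : IsClosed (closedBall z (4*r) ∩ {y | r ≤ dist y z}) := by
      apply Metric.isClosed_closedBall.inter
      have : {y : Eucl m | r ≤ dist y z} = (ball z r)ᶜ := by
        ext y; simp [mem_ball, not_lt]
      rw [this]; exact isOpen_ball.isClosed_compl
    intro y hy
    have hy2 := closure_minimal hsub hclosed hy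
    refine ⟨hball hy2.1, fun hyz => ?_⟩
    have := hy2.2
    rw [hyz] at this
    simp at this
    linarith
  -- boundary values
  have hbd : ∀ y ∈ frontier Ω', 0 ≤ u y := by
    intro y hy
    have hfr : frontier Ω' ⊆ sphere z (4*r) ∪ sphere z r := by
      intro p hp
      have h1 := frontier_inter_subset (ball z (4*r)) (closedBall z r)ᶜ hp
      rcases h1 with h | h
      · left; rw [← frontier_ball z (by positivity : (4*r) ≠ 0)]; exact h.1
      · right
        rw [frontier_compl, frontier_closedBall z hr.ne'] at h
        exact h.2
    rcases hfr hy with h | h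
    · -- outer sphere: u = w + 1
      have hdist : dist y z = 4*r := mem_sphere.1 h
      have hphi : phi z q y = Rval := by
        rw [phi, hsfn_dist y, hdist]
      have hyU : y ∈ U := hball (mem_closedBall.2 hdist.le)
      have := hwm1 y hyU
      simp only [hu, hphi]
      linarith
    · -- inner sphere: u = w - mlev
      have hdist : dist y z = r := mem_sphere.1 h
      have hphi : phi z q y = rval := by
        rw [phi, hsfn_dist y, hdist]
      have hyin : y ∈ closedBall z r := mem_closedBall.2 hdist.le
      have := hlow y hyin
      have hκeq : κ * (rval - Rval) = mlev + 1 := by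
        rw [hκ, div_mul_cancel₀ _ (by linarith : rval - Rval ≠ 0)]
      simp only [hu, hphi]
      nlinarith
  -- strict subsolution
  have hpde2 : ∀ p ∈ Ω', ∑ i, ∑ j, A p i j *
      fderiv ℝ (fun y => fderiv ℝ u y (ev i)) p (ev j) < 0 := by
    intro p hp
    have hpW : p ∈ W := hclW (subset_closure hp)
    have hpz : p ≠ z := hpW.2
    have hhess : ∀ i j : Fin m,
        fderiv ℝ (fun y => fderiv ℝ u y (ev i)) p (ev j)
        = fderiv ℝ (fun y => fderiv ℝ w y (ev i)) p (ev j)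
          - κ * fderiv ℝ (fun y => fderiv ℝ (phi z q) y (ev i)) p (ev j) := by
      intro i j
      exact hess_sub_const_mul W hWopen w (phi z q) κ (1 + κ * Rval)
        (hw.mono inter_subset_left) ((contDiffOn_phi z q).mono inter_subset_right) p hpW i j
    simp only [hhess]
    have hsplit : ∑ i, ∑ j, A p i j *
        (fderiv ℝ (fun y => fderiv ℝ w y (ev i)) p (ev j)
          - κ * fderiv ℝ (fun y => fderiv ℝ (phi z q) y (ev i)) p (ev j))
        = (∑ i, ∑ j, A p i j * fderiv ℝ (fun y => fderiv ℝ w y (ev i)) p (ev j))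
          - κ * (∑ i, ∑ j, A p i j * fderiv ℝ (fun y => fderiv ℝ (phi z q) y (ev i)) p (ev j)) := by
      rw [Finset.mul_sum, ← Finset.sum_sub_distrib]
      apply Finset.sum_congr rfl
      intro i _
      rw [Finset.mul_sum, ← Finset.sum_sub_distrib]
      apply Finset.sum_congr rfl
      intro j _
      ring
    rw [hsplit, hpde p hpW.1]
    have htrace := trace_phi_pos q z p hpz lam Lam hlam hq hγ (A p)
      (fun ξ => (hell p hpW.1 ξ).1) (fun ξ => (hell p hpW.1 ξ).2)
    have hspos : 0 < (sfn z p) ^ (-q-1) := Real.rpow_pos_of_pos (sfn_pos z hpz) _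
    nlinarith [mul_pos (mul_pos (mul_pos (by norm_num : (0:ℝ) < 2) hq) hlam) hspos]
  -- ellipticity nonneg
  have hell0 : ∀ p ∈ Ω', ∀ ξ : Eucl m, 0 ≤ ∑ i, ξ i * ∑ j, A p i j * ξ j := by
    intro p hp ξ
    have hpW : p ∈ W := hclW (subset_closure hp)
    have := (hell p hpW.1 ξ).1
    nlinarith [sq_nonneg ‖ξ‖, mul_nonneg hlam.le (sq_nonneg ‖ξ‖)]
  -- apply the minimum principle
  have hmp := min_principle W Ω' u A hWopen huC2 hΩopen hΩb hclW hell0 hpde2 hbd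
  -- x₁ ∈ Ω'
  have hx₁Ω : x₁ ∈ Ω' := by
    constructor
    · rw [mem_ball]; nlinarith
    · exact fun hc => absurd (mem_closedBall.1 hc) (not_le.2 hin)
  have hux₁ := hmp x₁ (subset_closure hx₁Ω)
  -- unfold u and bound phi from below
  have hphi_lb : ((3*r)^2) ^ (-q) ≤ phi z q x₁ := by
    rw [phi]
    apply rpow_neg_anti_le (sfn_pos z ?_) ?_ hq
    · intro hne
      rw [hne] at hin
      simp at hin
      linarith
    · rw [hsfn_dist]
      nlinarith [dist_nonneg (x := x₁) (y := z)]
  -- identity: the normalized barrier value at radius 3r is c0 q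
  have hkey : (((3*r)^2) ^ (-q) - Rval) / (rval - Rval) = c0 q := by
    have h9 : ((3*r)^2 : ℝ) = 9 * r^2 := by ring
    have h16 : ((4*r)^2 : ℝ) = 16 * r^2 := by ring
    have hr2 : (0:ℝ) < r^2 := by positivity
    have hP : (0:ℝ) < (r^2) ^ (-q) := Real.rpow_pos_of_pos hr2 _
    rw [hRval, hrval, h9, h16,
      Real.mul_rpow (by norm_num) hr2.le, Real.mul_rpow (by norm_num) hr2.le]
    show ((9:ℝ)^(-q) * (r^2)^(-q) - (16:ℝ)^(-q) * (r^2)^(-q)) / ((r^2)^(-q) - (16:ℝ)^(-q) * (r^2)^(-q))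
      = ((9:ℝ)^(-q) - (16:ℝ)^(-q)) / (1 - (16:ℝ)^(-q))
    rw [show (9:ℝ)^(-q) * (r^2)^(-q) - (16:ℝ)^(-q)*(r^2)^(-q)
        = ((9:ℝ)^(-q) - (16:ℝ)^(-q)) * (r^2)^(-q) from by ring,
      show ((r^2:ℝ))^(-q) - (16:ℝ)^(-q)*(r^2)^(-q) = (1 - (16:ℝ)^(-q)) * (r^2)^(-q) from by ring,
      mul_div_mul_right _ _ hP.ne']
  -- conclude
  have h5 : (mlev + 1) * c0 q ≤ κ * (phi z q x₁ - Rval) := by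
    have h6 : c0 q ≤ (phi z q x₁ - Rval) / (rval - Rval) := by
      rw [← hkey]
      exact (div_le_div_iff_of_pos_right (by linarith)).2 (by linarith)
    calc (mlev + 1) * c0 q ≤ (mlev + 1) * ((phi z q x₁ - Rval) / (rval - Rval)) :=
          mul_le_mul_of_nonneg_left h6 hmlev.le
      _ = κ * (phi z q x₁ - Rval) := by rw [hκ]; ring
  have : 0 ≤ w x₁ - κ * phi z q x₁ + (1 + κ * Rval) := hux₁
  nlinarith
end Step


section Geom
variable {d : ℕ}

def en (d : ℕ) : Eucl (d+1) := EuclideanSpace.single (Fin.last d) (1:ℝ)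

lemma norm_en : ‖en d‖ = 1 := by simp [en, EuclideanSpace.norm_single]

lemma ehead_sub (x y : Eucl (d+1)) : ehead x - ehead y = ehead (x - y) := rfl

lemma elast_sub (x y : Eucl (d+1)) : elast x - elast y = elast (x - y) := rfl

lemma norm_ehead_le (v : Eucl (d+1)) : ‖ehead v‖ ≤ ‖v‖ := by
  rw [eucl_norm_eq_sq, eucl_norm_eq_sq]
  apply Real.sqrt_le_sqrt
  rw [Fin.sum_univ_castSucc]
  have : (0:ℝ) ≤ v (Fin.last d) ^ 2 := sq_nonneg _
  have h2 : ∑ i : Fin d, (ehead v) i ^ 2 = ∑ i : Fin d, v i.castSucc ^ 2 := rfl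
  linarith [h2]

lemma abs_elast_le (v : Eucl (d+1)) : |elast v| ≤ ‖v‖ := by
  rw [eucl_norm_eq_sq, ← Real.sqrt_sq_eq_abs]
  apply Real.sqrt_le_sqrt
  exact Finset.single_le_sum (f := fun i => v i ^ 2) (fun j _ => sq_nonneg _) (Finset.mem_univ _)

lemma ehead_add_smul_en (x : Eucl (d+1)) (s : ℝ) : ehead (x + s • en d) = ehead x := by
  refine PiLp.ext fun i => ?_
  show x i.castSucc + s * (en d) i.castSucc = x i.castSucc
  have : (en d) i.castSucc = 0 := by
    simp [en, EuclideanSpace.single_apply, Fin.castSucc_lt_last i |>.ne]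
  rw [this, mul_zero, add_zero]

lemma elast_add_smul_en (x : Eucl (d+1)) (s : ℝ) : elast (x + s • en d) = elast x + s := by
  show x (Fin.last d) + s * (en d) (Fin.last d) = x (Fin.last d) + s
  have : (en d) (Fin.last d) = 1 := by simp [en, EuclideanSpace.single_apply]
  rw [this, mul_one]

lemma hG_add_smul_en (g : Eucl d → ℝ) (x : Eucl (d+1)) (s : ℝ) :
    hG g (x + s • en d) = hG g x + s := by
  rw [hG, hG, elast_add_smul_en, ehead_add_smul_en]
  ring

lemma dist_add_smul_en (x : Eucl (d+1)) (a b : ℝ) :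
    dist (x + a • en d) (x + b • en d) = |a - b| := by
  rw [dist_eq_norm]
  have : (x + a • en d) - (x + b • en d) = (a - b) • en d := by module
  rw [this, norm_smul, norm_en, mul_one, Real.norm_eq_abs]

lemma hG_lip (g : Eucl d → ℝ) (L : ℝ) (hL : 0 ≤ L)
    (hg : ∀ x' ∈ ball (0 : Eucl d) 1, ∀ y' ∈ ball (0 : Eucl d) 1,
      |g x' - g y'| ≤ L * ‖x' - y'‖)
    (x y : Eucl (d+1)) (hx : ‖ehead x‖ < 1) (hy : ‖ehead y‖ < 1) :
    |hG g x - hG g y| ≤ (1 + L) * ‖x - y‖ := by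
  have h1 : hG g x - hG g y = elast (x - y) - (g (ehead x) - g (ehead y)) := by
    rw [hG, hG, ← elast_sub]; ring
  rw [h1]
  have h2 : |g (ehead x) - g (ehead y)| ≤ L * ‖ehead x - ehead y‖ := by
    apply hg _ (mem_ball_zero_iff.2 hx) _ (mem_ball_zero_iff.2 hy)
  have h3 : ‖ehead x - ehead y‖ ≤ ‖x - y‖ := by
    rw [ehead_sub]; exact norm_ehead_le _
  have h4 : |elast (x - y)| ≤ ‖x - y‖ := abs_elast_le _
  have h5 : L * ‖ehead x - ehead y‖ ≤ L * ‖x - y‖ := mul_le_mul_of_nonneg_left h3 hL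
  calc |elast (x - y) - (g (ehead x) - g (ehead y))|
      ≤ |elast (x - y)| + |g (ehead x) - g (ehead y)| := abs_sub _ _
    _ ≤ ‖x - y‖ + L * ‖x - y‖ := by linarith
    _ = (1 + L) * ‖x - y‖ := by ring

lemma continuous_ehead : Continuous (ehead : Eucl (d+1) → Eucl d) := by
  have h1 : Continuous (fun x : Eucl (d+1) => (fun i : Fin d => x i.castSucc : Fin d → ℝ)) :=
    continuous_pi fun i => (EuclideanSpace.proj (i.castSucc : Fin (d+1))).continuous
  exact (PiLp.continuous_toLp 2 _).comp h1

lemma continuous_elast : Continuous (elast : Eucl (d+1) → ℝ) :=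
  (EuclideanSpace.proj (Fin.last d)).continuous

lemma isOpen_cylC (g : Eucl d → ℝ) (L : ℝ) (hL : 0 ≤ L)
    (hg : ∀ x' ∈ ball (0 : Eucl d) 1, ∀ y' ∈ ball (0 : Eucl d) 1,
      |g x' - g y'| ≤ L * ‖x' - y'‖) :
    IsOpen (cylC g 1 1) := by
  set V : Set (Eucl (d+1)) := {x | ‖ehead x‖ < 1} with hV
  have hVopen : IsOpen V := by
    have : V = (fun x : Eucl (d+1) => ‖ehead x‖) ⁻¹' (Iio 1) := rfl
    rw [this]
    exact (continuous_ehead.norm).isOpen_preimage _ isOpen_Iio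
  have hgcont : ContinuousOn g (ball (0 : Eucl d) 1) := by
    apply LipschitzOnWith.continuousOn (K := Real.toNNReal L)
    apply LipschitzOnWith.of_dist_le_mul
    intro a ha b hb
    calc dist (g a) (g b) = |g a - g b| := by rw [Real.dist_eq]
      _ ≤ L * ‖a - b‖ := hg a ha b hb
      _ = (Real.toNNReal L : ℝ) * dist a b := by
          rw [dist_eq_norm, Real.coe_toNNReal L hL]
  have hhcont : ContinuousOn (hG g) V := by
    apply ContinuousOn.sub (continuous_elast.continuousOn)
    apply hgcont.comp (continuous_ehead.continuousOn)
    intro x hx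
    exact mem_ball_zero_iff.2 hx
  have heq : cylC g 1 1 = V ∩ (hG g) ⁻¹' (Ioo 0 1) := by
    ext x
    simp [cylC, hV, mem_Ioo, and_assoc]
  rw [heq]
  exact hhcont.isOpen_inter_preimage hVopen isOpen_Ioo
end Geom


section Main

lemma unif_pm1 {d : ℕ} (U : Set (Eucl (d+1))) (A : Eucl (d+1) → Matrix (Fin (d+1)) (Fin (d+1)) ℝ)
    (w : Eucl (d+1) → ℝ) (hw : NondivSolution A U w) :
    ∀ x ∈ U, ∑ i, ∑ j, A x i j *
      fderiv ℝ (fun y => fderiv ℝ w y (ev i)) x (ev j) = 0 := by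
  intro x hx
  have := hw.2 x hx
  simpa [ev] using this

end Main

set_option maxHeartbeats 2000000 in
/-- **Harnack chain lower bound in Lipschitz cylinders** (inequality (2.3) in Step 1):
for every `δ ∈ (0,1/2)` there is `c ∈ (0,1)` depending only on `n, λ, Λ, L, δ` such
that if `w` solves `tr(A D²w) = 0` in `C_1`, `w ≥ -1` on `C_1` and `w ≥ M` on
`A_1 = C_1 \ C(1,δ)` for some `M > 0`, then `w(x₀) ≥ (M+1)c - 1` for every
`x₀ ∈ A_{1/2} = C_{1/2} \ C(1/2, δ/2)`. -/
theorem harnack_chain_lower_bound (d : ℕ) (hd : 1 ≤ d) (lam Lam L : ℝ)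
    (hlam : 0 < lam) (hlL : lam ≤ Lam) (hL : 0 < L)
    (δ : ℝ) (hδ : 0 < δ) (hδ' : δ < 1 / 2) :
    ∃ c : ℝ, 0 < c ∧ c < 1 ∧
      ∀ g : Eucl d → ℝ, g 0 = 0 →
        (∀ x' ∈ ball (0 : Eucl d) 1, ∀ y' ∈ ball (0 : Eucl d) 1,
          |g x' - g y'| ≤ L * ‖x' - y'‖) →
        ∀ A : Eucl (d + 1) → Matrix (Fin (d + 1)) (Fin (d + 1)) ℝ,
          UnifElliptic lam Lam (cylC g 1 1) A →
          ∀ w : Eucl (d + 1) → ℝ, NondivSolution A (cylC g 1 1) w →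
            (∀ x ∈ cylC g 1 1, -1 ≤ w x) →
            ∀ M : ℝ, 0 < M → (∀ x ∈ cylC g 1 1 \ cylC g 1 δ, M ≤ w x) →
            ∀ x₀ ∈ cylC g (1 / 2) (1 / 2) \ cylC g (1 / 2) (δ / 2),
              (M + 1) * c - 1 ≤ w x₀ := by
  have hLam : 0 < Lam := lt_of_lt_of_le hlam hlL
  set q : ℝ := ((d:ℝ)+1) * Lam / (2*lam) with hqdef
  have hq : 0 < q := by positivity
  have h2q : 2*q*lam = ((d:ℝ)+1)*Lam := by
    rw [hqdef]; field_simp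
  have hγ : (↑(d+1) : ℝ) * Lam ≤ 2*(q+1)*lam - lam := by
    push_cast
    nlinarith
  set K : ℝ := 1 + L with hKdef
  have hK1 : 1 < K := by rw [hKdef]; linarith
  set r : ℝ := δ / (16*K) with hrdef
  have hr : 0 < r := by rw [hrdef]; positivity
  have hKr : K * r = δ/16 := by
    rw [hrdef]; field_simp
  set N : ℕ := Nat.ceil ((9*K-3)/2) with hNdef
  have hNge : (9*K-3)/2 ≤ (N:ℝ) := Nat.le_ceil _
  have hNlt : (N:ℝ) < (9*K-3)/2 + 1 := by
    rw [hNdef]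
    exact Nat.ceil_lt_add_one (by nlinarith)
  have hc0pos := c0_pos q hq
  have hc0lt := c0_lt_one q hq
  refine ⟨(c0 q)^(N+1), pow_pos hc0pos _, pow_lt_one₀ hc0pos.le hc0lt (Nat.succ_ne_zero N), ?_⟩
  intro g hg0 hglip A hA w hwsol hwm1 M hM hwM x₀ hx₀
  set U : Set (Eucl (d+1)) := cylC g 1 1 with hUdef
  have hUopen : IsOpen U := isOpen_cylC g L hL.le hglip
  have hpde' := unif_pm1 U A w hwsol
  have hx₀1 : ‖ehead x₀‖ < 1/2 := hx₀.1.1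
  have hx₀2 : 0 < hG g x₀ := hx₀.1.2.1
  have hx₀3 : hG g x₀ < 1/2 := hx₀.1.2.2
  have hx₀4 : δ/2 ≤ hG g x₀ := by
    by_contra hcon
    push_neg at hcon
    exact hx₀.2 ⟨hx₀1, hx₀2, hcon⟩
  set h₀ : ℝ := hG g x₀ with hh₀
  set t : ℕ → ℝ := fun k => 9*δ/16 - 2*r*k with htdef
  set z : ℕ → Eucl (d+1) := fun k => x₀ + (t k) • en d with hzdef
  have htN_gt : r < t N := by
    have h1 : 2*r*(N:ℝ) < r*(9*K-1) := by nlinarith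
    have h2 : r*(9*K-1) = 9*(K*r) - r := by ring
    rw [hKr] at h2
    simp only [htdef]
    nlinarith
  have htN_le : t N ≤ 3*r := by
    have h1 : r*(9*K-3) ≤ 2*r*(N:ℝ) := by nlinarith
    have h2 : r*(9*K-3) = 9*(K*r) - 3*r := by ring
    rw [hKr] at h2
    simp only [htdef]
    nlinarith
  have ht_mono : ∀ k ≤ N, t N ≤ t k := by
    intro k hk
    simp only [htdef]
    have : (k:ℝ) ≤ (N:ℝ) := by exact_mod_cast hk
    nlinarith
  have ht_ub : ∀ k : ℕ, t k ≤ 9*δ/16 := by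
    intro k
    simp only [htdef]
    have : (0:ℝ) ≤ (k:ℝ) := Nat.cast_nonneg k
    nlinarith
  -- geometric inclusion of balls along the chain in U
  have hhead_small : ∀ s : ℝ, ‖ehead (x₀ + s • en d)‖ < 1/2 := by
    intro s; rw [ehead_add_smul_en]; exact hx₀1
  have hGzs : ∀ s : ℝ, hG g (x₀ + s • en d) = h₀ + s := fun s => hG_add_smul_en g x₀ s
  have hinU : ∀ s : ℝ, 0 ≤ s → s ≤ 9*δ/16 →
      ∀ y, dist y (x₀ + s • en d) ≤ 4*r → y ∈ U := by
    intro s hs0 hs1 y hy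
    set zs : Eucl (d+1) := x₀ + s • en d with hzs
    have hdist : ‖y - zs‖ ≤ 4*r := by rw [← dist_eq_norm]; exact hy
    have h4r : 4*r ≤ δ/4 := by
      have : 4*(K*r) = δ/4 := by rw [hKr]; ring
      nlinarith [mul_le_mul_of_nonneg_right hK1.le hr.le]
    have hheady : ‖ehead y‖ < 1 := by
      have h1 : ‖ehead y‖ - ‖ehead zs‖ ≤ ‖ehead y - ehead zs‖ := norm_sub_norm_le _ _
      have h2 : ‖ehead y - ehead zs‖ ≤ ‖y - zs‖ := by
        rw [ehead_sub]; exact norm_ehead_le _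
      have h3 := hhead_small s
      have : ‖ehead zs‖ < 1/2 := h3
      nlinarith
    have hlip := hG_lip g L hL.le hglip y zs hheady (lt_trans (hhead_small s) (by norm_num))
    have hKbound : (1+L) * ‖y - zs‖ ≤ δ/4 := by
      have h1 : (1+L) * ‖y - zs‖ ≤ (1+L) * (4*r) :=
        mul_le_mul_of_nonneg_left hdist (by linarith)
      have h2 : (1+L) * (4*r) = 4*(K*r) := by rw [hKdef]; ring
      rw [hKr] at h2
      nlinarith
    have habs : |hG g y - hG g zs| ≤ δ/4 := le_trans hlip hKbound
    have hGzs' : hG g zs = h₀ + s := hGzs s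
    rw [abs_le] at habs
    refine ⟨hheady, ?_, ?_⟩
    · have : hG g y ≥ h₀ + s - δ/4 := by rw [← hGzs']; linarith [habs.1]
      nlinarith
    · have : hG g y ≤ h₀ + s + δ/4 := by rw [← hGzs']; linarith [habs.2]
      nlinarith
  -- base: w ≥ M on the first ball
  have hbase : ∀ y ∈ closedBall (z 0) r, M ≤ w y := by
    intro y hy
    have ht0' : t 0 = 9*δ/16 := by simp [htdef]
    have hyU : y ∈ U := by
      apply hinU (t 0) (by rw [ht0']; positivity) (by rw [ht0']) y
      calc dist y (x₀ + (t 0) • en d) = dist y (z 0) := rfl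
        _ ≤ r := mem_closedBall.1 hy
        _ ≤ 4*r := by linarith
    have hdist : ‖y - z 0‖ ≤ r := by rw [← dist_eq_norm]; exact mem_closedBall.1 hy
    have hheady : ‖ehead y‖ < 1 := hyU.1
    have hlip := hG_lip g L hL.le hglip y (z 0) hheady
      (lt_trans (hhead_small (t 0)) (by norm_num))
    have hbound : (1+L)*‖y - z 0‖ ≤ δ/16 := by
      have h1 : (1+L) * ‖y - z 0‖ ≤ (1+L) * r := mul_le_mul_of_nonneg_left hdist (by linarith)
      have h2 : (1+L) * r = K * r := by rw [hKdef]
      rw [hKr] at h2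
      linarith
    have habs : |hG g y - hG g (z 0)| ≤ δ/16 := le_trans hlip hbound
    rw [abs_le] at habs
    have hz0 : hG g (z 0) = h₀ + t 0 := hGzs (t 0)
    have hGy : δ ≤ hG g y := by
      have : hG g y ≥ h₀ + t 0 - δ/16 := by rw [← hz0]; linarith [habs.1]
      rw [ht0'] at this
      nlinarith
    apply hwM
    exact ⟨hyU, fun hyc => absurd hyc.2.2 (not_lt.2 hGy)⟩
  -- chain induction
  have hzdist : ∀ j k : ℕ, dist (z j) (z k) = |t j - t k| := by
    intro j k
    simp only [hzdef]
    exact dist_add_smul_en x₀ (t j) (t k)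
  have hchain : ∀ k, k ≤ N → ∀ y ∈ closedBall (z k) r, (M+1)*(c0 q)^k - 1 ≤ w y := by
    intro k
    induction k with
    | zero =>
      intro _ y hy
      rw [pow_zero, mul_one]
      linarith [hbase y hy]
    | succ k ih =>
      intro hk1 y hy
      have hk : k ≤ N := Nat.le_of_succ_le hk1
      have htk0 : 0 ≤ t k := le_trans (le_trans hr.le htN_gt.le) (ht_mono k hk)
      have hball : closedBall (z k) (4*r) ⊆ U := by
        intro p hp
        exact hinU (t k) htk0 (ht_ub k) p (mem_closedBall.1 hp)
      have hmlev : 0 < ((M+1)*(c0 q)^k - 1) + 1 := by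
        have : 0 < (M+1)*(c0 q)^k := by positivity
        linarith
      have hstep := barrier_step lam Lam q hlam hq hγ U hUopen A hA w hwsol.1 hpde' hwm1
        (z k) r hr hball ((M+1)*(c0 q)^k - 1) hmlev (ih hk)
      have hdy : dist y (z k) ≤ 3*r := by
        have h1 : dist y (z k) ≤ dist y (z (k+1)) + dist (z (k+1)) (z k) := dist_triangle _ _ _
        have h2 : dist (z (k+1)) (z k) = 2*r := by
          rw [hzdist]
          have : t (k+1) - t k = -(2*r) := by
            simp only [htdef]
            push_cast
            ring
          rw [this, abs_neg, abs_of_pos (by linarith)]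
        have h3 : dist y (z (k+1)) ≤ r := mem_closedBall.1 hy
        linarith
      have := hstep y hdy
      have heq : ((M+1)*(c0 q)^k - 1 + 1) * c0 q = (M+1)*(c0 q)^(k+1) := by
        rw [pow_succ]; ring
      linarith [heq ▸ this]
  -- final step at z N reaching x₀
  have htk0 : 0 ≤ t N := by linarith
  have hball : closedBall (z N) (4*r) ⊆ U := by
    intro p hp
    exact hinU (t N) htk0 (ht_ub N) p (mem_closedBall.1 hp)
  have hmlev : 0 < ((M+1)*(c0 q)^N - 1) + 1 := by
    have : 0 < (M+1)*(c0 q)^N := by positivity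
    linarith
  have hstep := barrier_step lam Lam q hlam hq hγ U hUopen A hA w hwsol.1 hpde' hwm1
    (z N) r hr hball ((M+1)*(c0 q)^N - 1) hmlev (hchain N le_rfl)
  have hdx₀ : dist x₀ (z N) ≤ 3*r := by
    have h1 : x₀ = x₀ + (0:ℝ) • en d := by simp
    have h2 : dist x₀ (z N) = |0 - t N| := by
      conv_lhs => rw [h1]
      exact dist_add_smul_en x₀ 0 (t N)
    rw [h2, zero_sub, abs_neg, abs_of_pos (by linarith)]
    exact htN_le
  have hfin := hstep x₀ hdx₀
  have heq : ((M+1)*(c0 q)^N - 1 + 1) * c0 q = (M+1)*(c0 q)^(N+1) := by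
    rw [pow_succ]; ring
  linarith [heq ▸ hfin]

end
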